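/- Let n = 2^(2^ν) + 1 be prime with ν ≥ 2, and let F₁ be a set of nonzero residues modulo n. Suppose there is a constant μ such that for every nonzero residue r modulo n, the number (1 if r ∈ F₁ else 0) + #{(a,b) ∈ F₁ × F₁ : a + b ≡ r (mod n)} equals μ (i.e., the multiset F₁ + F₁² covers every nonzero residue the same number of times). Then F₁ is closed under doubling: for every a ∈ F₁, the residue 2a mod n also belongs to F₁. -/

import Mathlib

private lemma parityL {n : ℕ} [NeZero n] (F : Finset (ZMod n)) (r c : ZMod n)
    (hc : c + c = r) (huniq : ∀ a : ZMod n, a + a = r → a = c) :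
    ((((F ×ˢ F).filter (fun p => p.1 + p.2 = r)).card : ZMod 2)) =
      if c ∈ F then 1 else 0 := by
  classical
  have hcard : ((F ×ˢ F).filter (fun p => p.1 + p.2 = r)).card
      = (Finset.univ.filter (fun a : ZMod n => a ∈ F ∧ r - a ∈ F)).card := by
    apply Finset.card_bij (fun p _ => p.1)
    · rintro ⟨a, b⟩ hp
      simp only [Finset.mem_filter, Finset.mem_product] at hp ⊢
      obtain ⟨⟨ha, hb⟩, hab⟩ := hp
      refine ⟨Finset.mem_univ _, ha, ?_⟩
      have : r - a = b := by rw [← hab]; ring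
      rwa [this]
    · rintro ⟨a, b⟩ hp ⟨a', b'⟩ hp' h
      simp only [Finset.mem_filter, Finset.mem_product] at hp hp'
      simp only at h
      subst h
      have : b = b' := by
        have h1 := hp.2; have h2 := hp'.2
        have := h1.trans h2.symm
        linear_combination this
      simp [this]
    · intro a ha
      simp only [Finset.mem_filter, Finset.mem_univ, true_and] at ha
      refine ⟨(a, r - a), ?_, rfl⟩
      simp only [Finset.mem_filter, Finset.mem_product]
      exact ⟨⟨ha.1, ha.2⟩, by ring⟩
  rw [hcard, Finset.card_filter]
  push_cast
  set f : ZMod n → ZMod 2 := fun a => if a ∈ F ∧ r - a ∈ F then 1 else 0 with hf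
  have hcmem : c ∈ (Finset.univ : Finset (ZMod n)) := Finset.mem_univ c
  rw [← Finset.add_sum_erase _ f hcmem]
  have hrest : ∑ x ∈ Finset.univ.erase c, f x = 0 := by
    apply Finset.sum_involution (fun a _ => r - a)
    · intro a ha
      have : f (r - a) = f a := by
        simp only [hf]
        have : r - (r - a) = a := by ring
        rw [this]; exact if_congr and_comm rfl rfl
      rw [this]
      simp only [hf]
      split <;> decide
    · intro a ha _
      intro h
      have : a + a = r := by linear_combination -h
      exact (Finset.mem_erase.mp ha).1 (huniq a this)
    · intro a ha
      rw [Finset.mem_erase] at ha ⊢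
      refine ⟨?_, Finset.mem_univ _⟩
      intro h
      have : a = c := by
        have hrc : r - c = c := by linear_combination -hc
        have : a = r - c := by linear_combination -h
        rw [this, hrc]
      exact ha.1 this
    · intro a ha; ring
  rw [hrest, add_zero]
  have : r - c = c := by linear_combination -hc
  simp [hf, this, and_self]


/-- If `n = 2 ^ 2 ^ ν + 1` is prime (`ν ≥ 2`) and `F₁` is a set of nonzero
residues mod `n` such that the multiset `F₁ + F₁²` covers every nonzero residue the same
number `μ` of times, then `F₁` is closed under doubling. -/
theorem stmt0 (ν n : ℕ) (hν : 2 ≤ ν) (hn : n = 2 ^ (2 ^ ν) + 1) (hp : n.Prime)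
    (F₁ : Finset (ZMod n)) (hF₁ : ∀ a ∈ F₁, a ≠ 0) (μ : ℕ)
    (hcov : ∀ r : ZMod n, r ≠ 0 →
      (if r ∈ F₁ then 1 else 0) +
        ((F₁ ×ˢ F₁).filter (fun p => p.1 + p.2 = r)).card = μ) :
    ∀ a ∈ F₁, 2 * a ∈ F₁ := by

  classical
  haveI hfact : Fact n.Prime := ⟨hp⟩
  have hexpν : 4 ≤ 2 ^ ν := by
    calc (4:ℕ) = 2 ^ 2 := rfl
    _ ≤ 2 ^ ν := Nat.pow_le_pow_right (by norm_num) hν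
  have hn17 : 17 ≤ n := by
    have : 16 ≤ 2 ^ (2 ^ ν) := by
      calc (16:ℕ) = 2 ^ 4 := rfl
      _ ≤ 2 ^ (2 ^ ν) := Nat.pow_le_pow_right (by norm_num) hexpν
    omega
  haveI : NeZero n := ⟨by omega⟩
  have htwo : (2 : ZMod n) ≠ 0 := by
    have : ((2:ℕ) : ZMod n) ≠ 0 := by
      rw [Ne, ZMod.natCast_eq_zero_iff]
      intro h; have := Nat.le_of_dvd (by norm_num) h; omega
    simpa using this
  -- key parity identity
  have key : ∀ a : ZMod n, a ≠ 0 →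
      (if 2 * a ∈ F₁ then (1:ZMod 2) else 0) + (if a ∈ F₁ then 1 else 0) = (μ : ZMod 2) := by
    intro a ha
    have h2a : (2:ZMod n) * a ≠ 0 := mul_ne_zero htwo ha
    have h := hcov (2*a) h2a
    have hcast := congrArg (Nat.cast : ℕ → ZMod 2) h
    push_cast at hcast
    rw [parityL F₁ (2*a) a (by ring) ?_] at hcast
    · exact hcast
    · intro b hb
      apply mul_left_cancel₀ htwo
      linear_combination hb
  rcases Nat.even_or_odd μ with hev | hodd
  · -- μ even : direct
    have hμ2 : (μ : ZMod 2) = 0 := by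
      obtain ⟨k, hk⟩ := hev; subst hk; push_cast
      have h2 : (2 : ZMod 2) = 0 := rfl
      linear_combination (k : ZMod 2) * h2
    intro a ha
    have h := key a (hF₁ a ha)
    rw [hμ2, if_pos ha] at h
    by_contra h2a
    rw [if_neg h2a] at h
    simp at h
  · -- μ odd : contradiction
    exfalso
    obtain ⟨m, hm⟩ : ∃ m, ν = m + 1 := ⟨ν - 1, by omega⟩
    have hμ1 : (μ : ZMod 2) = 1 := by
      obtain ⟨k, hk⟩ := hodd; subst hk; push_cast
      have h2 : (2 : ZMod 2) = 0 := rfl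
      linear_combination (k : ZMod 2) * h2
    have swap : ∀ a : ZMod n, a ≠ 0 → (a ∈ F₁ ↔ 2 * a ∉ F₁) := by
      intro a ha
      have h := key a ha
      rw [hμ1] at h
      constructor
      · intro h1 h2
        rw [if_pos h2, if_pos h1] at h
        exact absurd h (by decide)
      · intro h2
        by_contra h1
        rw [if_neg h2, if_neg h1] at h
        exact absurd h (by decide)
    -- F₁ closed under multiplication by even powers of 2
    have pow4 : ∀ (k : ℕ) (a : ZMod n), a ≠ 0 → ((2:ZMod n) ^ (2 * k) * a ∈ F₁ ↔ a ∈ F₁) := by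
      intro k
      induction k with
      | zero => intro a ha; simp
      | succ k ih =>
        intro a ha
        have h2a : (2:ZMod n) * a ≠ 0 := mul_ne_zero htwo ha
        have h4a : (2:ZMod n) * (2 * a) ≠ 0 := mul_ne_zero htwo h2a
        have heq : (2:ZMod n) ^ (2 * (k+1)) * a = 2 ^ (2*k) * (2 * (2 * a)) := by ring
        rw [heq, ih _ h4a]
        have s1 := swap a ha
        have s2 := swap (2*a) h2a
        tauto
    have hneg1 : (2:ZMod n) ^ (2 ^ ν) = -1 := by
      have h0 : ((2 ^ (2 ^ ν) + 1 : ℕ) : ZMod n) = 0 := by rw [← hn]; exact ZMod.natCast_self n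
      push_cast at h0
      linear_combination h0
    have hsym : ∀ a : ZMod n, a ∈ F₁ → -a ∈ F₁ := by
      intro a ha
      have ha0 := hF₁ a ha
      have hexp : 2 ^ ν = 2 * 2 ^ m := by rw [hm, pow_succ]; ring
      have hkey : (2:ZMod n) ^ (2 * 2 ^ m) * a = -a := by
        rw [← hexp, hneg1]; ring
      rw [← hkey]
      exact (pow4 (2 ^ m) a ha0).mpr ha
    -- cardinalities
    set N₀ : Finset (ZMod n) := Finset.univ.filter (fun x => x ≠ 0) with hN₀
    have hN₀e : N₀ = Finset.univ.erase 0 := by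
      ext x; simp [hN₀, Finset.mem_erase, and_comm]
    have hN₀card : N₀.card = n - 1 := by
      rw [hN₀e, Finset.card_erase_of_mem (Finset.mem_univ 0), Finset.card_univ, ZMod.card]
    have hsub : F₁ ⊆ N₀ := by
      intro a ha; simp [hN₀, hF₁ a ha]
    set G : Finset (ZMod n) := N₀ \ F₁ with hG
    have hle1 : F₁.card ≤ G.card := by
      apply Finset.card_le_card_of_injOn (fun a => 2 * a)
      · intro a ha
        have ha0 := hF₁ a ha
        have h2a0 : (2:ZMod n) * a ≠ 0 := mul_ne_zero htwo ha0
        rw [hG, Finset.mem_coe, Finset.mem_sdiff]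
        exact ⟨by simp [hN₀, h2a0], (swap a ha0).mp ha⟩
      · intro a _ b _ h
        exact mul_left_cancel₀ htwo h
    have hle2 : G.card ≤ F₁.card := by
      apply Finset.card_le_card_of_injOn (fun a => 2 * a)
      · intro a ha
        rw [hG, Finset.mem_coe, Finset.mem_sdiff] at ha
        obtain ⟨haN, haF⟩ := ha
        have ha0 : a ≠ 0 := by simpa [hN₀] using haN
        have := swap a ha0
        show 2 * a ∈ F₁
        tauto
      · intro a _ b _ h
        exact mul_left_cancel₀ htwo h
    have hGcard : G.card = N₀.card - F₁.card := Finset.card_sdiff_of_subset hsub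
    have hFle : F₁.card ≤ N₀.card := Finset.card_le_card hsub
    have hhalf : 2 * F₁.card = n - 1 := by omega
    -- sum the covering condition
    have hsum : (∑ r ∈ N₀, (if r ∈ F₁ then 1 else 0)) +
        (∑ r ∈ N₀, ((F₁ ×ˢ F₁).filter (fun p => p.1 + p.2 = r)).card) = N₀.card * μ := by
      rw [← Finset.sum_add_distrib]
      rw [Finset.sum_congr rfl (fun r hr => hcov r (by simpa [hN₀] using hr))]
      simp [Finset.sum_const, mul_comm]
    have h1 : (∑ r ∈ N₀, (if r ∈ F₁ then 1 else 0)) = F₁.card := by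
      rw [Finset.sum_boole]
      norm_num
      congr 1
      ext x; simp only [Finset.mem_filter]
      constructor
      · exact fun h => h.2
      · intro h; exact ⟨hsub h, h⟩
    have htot : (F₁ ×ˢ F₁).card =
        ∑ r : ZMod n, ((F₁ ×ˢ F₁).filter (fun p => p.1 + p.2 = r)).card :=
      Finset.card_eq_sum_card_fiberwise (fun p _ => Finset.mem_univ _)
    have hN0 : ((F₁ ×ˢ F₁).filter (fun p => p.1 + p.2 = 0)).card = F₁.card := by
      symm
      apply Finset.card_bij (fun a _ => (a, -a))
      · intro a ha
        simp only [Finset.mem_filter, Finset.mem_product]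
        exact ⟨⟨ha, hsym a ha⟩, by ring⟩
      · intro a _ b _ h
        exact (Prod.mk.injEq _ _ _ _ ▸ h : (a, -a) = (b, -b)) |> fun h => congrArg Prod.fst h
      · rintro ⟨a, b⟩ hp
        simp only [Finset.mem_filter, Finset.mem_product] at hp
        refine ⟨a, hp.1.1, ?_⟩
        have : b = -a := by linear_combination hp.2
        rw [this]
    have hsplit : (∑ r : ZMod n, ((F₁ ×ˢ F₁).filter (fun p => p.1 + p.2 = r)).card)
        = F₁.card + ∑ r ∈ N₀, ((F₁ ×ˢ F₁).filter (fun p => p.1 + p.2 = r)).card := by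
      rw [hN₀e, ← Finset.add_sum_erase _ _ (Finset.mem_univ (0 : ZMod n)), hN0]
    have hprodcard : (F₁ ×ˢ F₁).card = F₁.card * F₁.card := by
      rw [Finset.card_product]
    -- conclude
    have hfin : (n - 1) * μ = F₁.card * F₁.card := by
      have := hsum
      rw [h1] at this
      rw [hprodcard, hsplit] at htot
      rw [← hN₀card, ← this]
      exact htot.symm
    have hc0 : F₁.card ≠ 0 := by
      intro h; rw [h] at hhalf; omega
    have h2μ : 2 * μ = F₁.card := by
      have : F₁.card * (2 * μ) = F₁.card * F₁.card := by
        rw [← hfin, ← hhalf]; ring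
      exact Nat.eq_of_mul_eq_mul_left (Nat.pos_of_ne_zero hc0) this
    have h4μ : 4 * μ = 2 ^ (2 ^ ν) := by omega
    have hμval : μ = 2 ^ (2 ^ ν - 2) := by
      have : (2:ℕ) ^ (2 ^ ν) = 4 * 2 ^ (2 ^ ν - 2) := by
        rw [show 2 ^ ν = 2 + (2 ^ ν - 2) by omega, pow_add]
        norm_num
      omega
    have hμeven : 2 ∣ μ := by
      rw [hμval]
      exact dvd_pow_self 2 (by omega)
    obtain ⟨k, hk⟩ := hμeven
    have := Nat.odd_iff.mp hodd
    omega
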